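/- arXiv:2212.11111 — 3 statements merged into one kernel-verified Lean document; each statement's English description precedes it below -/
import Mathlib

section
/- Let 𝒜 = 𝒜_i + 𝒜_e be bounded linear operators on a Hilbert space W, with 𝒜 coercive with constant α_𝒜 > 0 and 𝒜_e bounded with norm ‖𝒜_e‖. Suppose the iterates satisfy 𝒜_i w^{k+1} + 𝒜_e w^k = f, where 𝒜 w = f. If α_𝒜 > 2‖𝒜_e‖, then the iteration converges: w^k → w. -/
open scoped RealInnerProductSpace

/-- Convergence of the unrelaxed splitting iteration `𝒜_i w^{k+1} + 𝒜_e w^k = f`, where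
`𝒜 = 𝒜_i + 𝒜_e` is coercive with constant `α𝒜 > 2‖𝒜_e‖`. -/
theorem splitting_iteration_converges {W : Type*} [NormedAddCommGroup W]
    [InnerProductSpace ℝ W] [CompleteSpace W]
    (Ai Ae : W →L[ℝ] W) (αA : ℝ) (hαA : 0 < αA)
    (hcoer : ∀ x : W, ⟪(Ai + Ae) x, x⟫ ≥ αA * ‖x‖ ^ 2)
    (f wex : W) (hex : (Ai + Ae) wex = f)
    (w : ℕ → W) (hit : ∀ k : ℕ, Ai (w (k + 1)) + Ae (w k) = f)
    (hcond : αA > 2 * ‖Ae‖) :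
    Filter.Tendsto w Filter.atTop (nhds wex) := by
  set e : ℕ → W := fun k => wex - w k with he
  have hAe0 : (0 : ℝ) ≤ ‖Ae‖ := norm_nonneg _
  have hsub : αA - ‖Ae‖ > 0 := by linarith
  set ρ : ℝ := ‖Ae‖ / (αA - ‖Ae‖) with hρ
  have hρ0 : 0 ≤ ρ := div_nonneg hAe0 hsub.le
  have hρ1 : ρ < 1 := (div_lt_one hsub).2 (by linarith)
  -- key contraction estimate
  have key : ∀ k, ‖e (k + 1)‖ ≤ ρ * ‖e k‖ := by
    intro k
    have heq : (Ai + Ae) (e (k + 1)) = Ae (e (k + 1) - e k) := by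
      have h1 : Ai (e (k + 1)) + Ae (e k) = 0 := by
        have := hit k
        simp only [he, map_sub]
        rw [ContinuousLinearMap.add_apply] at hex
        have : Ai (w (k + 1)) + Ae (w k) = Ai wex + Ae wex := by rw [this, hex]
        abel_nf
        abel_nf at this
        linear_combination (norm := abel) -this
      simp only [ContinuousLinearMap.add_apply, map_sub]
      have h2 : Ai (e (k + 1)) = -Ae (e k) := by linear_combination (norm := abel) h1
      rw [h2]; abel
    have hc := hcoer (e (k + 1))
    rw [heq] at hc
    have hbound : ⟪Ae (e (k + 1) - e k), e (k + 1)⟫ ≤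
        ‖Ae‖ * (‖e (k + 1)‖ + ‖e k‖) * ‖e (k + 1)‖ := by
      calc ⟪Ae (e (k + 1) - e k), e (k + 1)⟫ ≤ ‖Ae (e (k + 1) - e k)‖ * ‖e (k + 1)‖ :=
            real_inner_le_norm _ _
        _ ≤ ‖Ae‖ * ‖e (k + 1) - e k‖ * ‖e (k + 1)‖ := by
            gcongr; exact Ae.le_opNorm _
        _ ≤ ‖Ae‖ * (‖e (k + 1)‖ + ‖e k‖) * ‖e (k + 1)‖ := by
            gcongr; exact norm_sub_le _ _
    have hmain : αA * ‖e (k + 1)‖ ^ 2 ≤ ‖Ae‖ * (‖e (k + 1)‖ + ‖e k‖) * ‖e (k + 1)‖ :=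
      le_trans hc hbound
    rcases eq_or_lt_of_le (norm_nonneg (e (k + 1))) with h0 | h0
    · rw [← h0]; positivity
    · have hdiv : αA * ‖e (k + 1)‖ ≤ ‖Ae‖ * (‖e (k + 1)‖ + ‖e k‖) := by
        have := mul_le_mul_of_nonneg_right hmain (le_of_lt (inv_pos.2 h0))
        calc αA * ‖e (k + 1)‖ = αA * ‖e (k + 1)‖ ^ 2 * (‖e (k + 1)‖)⁻¹ := by
              field_simp
          _ ≤ ‖Ae‖ * (‖e (k + 1)‖ + ‖e k‖) * ‖e (k + 1)‖ * (‖e (k + 1)‖)⁻¹ := this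
          _ = ‖Ae‖ * (‖e (k + 1)‖ + ‖e k‖) := by field_simp
      rw [hρ, div_mul_eq_mul_div, le_div_iff₀ hsub]
      nlinarith [hdiv]
  -- geometric decay
  have geo : ∀ k, ‖e k‖ ≤ ρ ^ k * ‖e 0‖ := by
    intro k
    induction k with
    | zero => simp
    | succ n ih =>
      calc ‖e (n + 1)‖ ≤ ρ * ‖e n‖ := key n
        _ ≤ ρ * (ρ ^ n * ‖e 0‖) := by gcongr
        _ = ρ ^ (n + 1) * ‖e 0‖ := by ring
  have htend : Filter.Tendsto (fun k => ‖w k - wex‖) Filter.atTop (nhds 0) := by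
    apply squeeze_zero (fun k => norm_nonneg _) (fun k => ?_)
      (by simpa using (tendsto_pow_atTop_nhds_zero_of_lt_one hρ0 hρ1).mul_const ‖e 0‖)
    rw [← norm_neg]
    simpa [he] using geo k
  exact tendsto_iff_norm_sub_tendsto_zero.2 htend
end

section
/- Under the hypotheses of the unrelaxed splitting iteration (𝒜 coercive with constant α_𝒜, 𝒜_e bounded), the error satisfies (α_𝒜²/‖𝒜_e‖² − 2)‖e^{k+1}‖² ≤ 2‖e^k‖², so whenever α_𝒜² > 4‖𝒜_e‖² one has the linear contraction ‖e^{k+1}‖ ≤ √(2/(α_𝒜²/‖𝒜_e‖² − 2)) ‖e^k‖. -/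
open scoped RealInnerProductSpace

/-- Error estimate for the unrelaxed splitting iteration: from the error equation
`𝒜 e^{k+1} = 𝒜_e(e^{k+1} − e^k)` and coercivity of `𝒜` one gets
`(α𝒜²/‖𝒜_e‖² − 2)‖e^{k+1}‖² ≤ 2‖e^k‖²`, hence a linear contraction whenever
`α𝒜² > 4‖𝒜_e‖²`. -/
theorem splitting_error_estimate {W : Type*} [NormedAddCommGroup W]
    [InnerProductSpace ℝ W] [CompleteSpace W]
    (A Ae : W →L[ℝ] W) (αA : ℝ) (hαA : 0 < αA)
    (hcoer : ∀ x : W, ⟪A x, x⟫ ≥ αA * ‖x‖ ^ 2)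
    (hAe : 0 < ‖Ae‖)
    (e : ℕ → W) (herr : ∀ k : ℕ, A (e (k + 1)) = Ae (e (k + 1) - e k)) :
    ∀ k : ℕ,
      (αA ^ 2 / ‖Ae‖ ^ 2 - 2) * ‖e (k + 1)‖ ^ 2 ≤ 2 * ‖e k‖ ^ 2 ∧
      (αA ^ 2 > 4 * ‖Ae‖ ^ 2 →
        ‖e (k + 1)‖ ≤ Real.sqrt (2 / (αA ^ 2 / ‖Ae‖ ^ 2 - 2)) * ‖e k‖) := by
  intro k
  have hA2 : (0:ℝ) < ‖Ae‖ ^ 2 := by positivity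
  have h1 : αA * ‖e (k+1)‖ ^ 2 ≤ ‖Ae‖ * ‖e (k+1) - e k‖ * ‖e (k+1)‖ := by
    calc αA * ‖e (k+1)‖ ^ 2 ≤ ⟪A (e (k+1)), e (k+1)⟫ := hcoer _
      _ = ⟪Ae (e (k+1) - e k), e (k+1)⟫ := by rw [herr]
      _ ≤ ‖Ae (e (k+1) - e k)‖ * ‖e (k+1)‖ := real_inner_le_norm _ _
      _ ≤ ‖Ae‖ * ‖e (k+1) - e k‖ * ‖e (k+1)‖ :=
          mul_le_mul_of_nonneg_right (Ae.le_opNorm _) (norm_nonneg _)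
  have h2 : αA * ‖e (k+1)‖ ≤ ‖Ae‖ * ‖e (k+1) - e k‖ := by
    rcases eq_or_lt_of_le (norm_nonneg (e (k+1))) with h0 | h0
    · rw [← h0, mul_zero]; positivity
    · have := h1
      rw [sq] at this
      nlinarith
  have hsub : ‖e (k+1) - e k‖ ^ 2 ≤ 2 * ‖e (k+1)‖ ^ 2 + 2 * ‖e k‖ ^ 2 := by
    have := norm_sub_le (e (k+1)) (e k)
    nlinarith [sq_nonneg (‖e (k+1)‖ - ‖e k‖), norm_nonneg (e (k+1) - e k)]
  have key : αA ^ 2 * ‖e (k+1)‖ ^ 2 ≤ ‖Ae‖ ^ 2 * (2 * ‖e (k+1)‖ ^ 2 + 2 * ‖e k‖ ^ 2) := by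
    nlinarith [norm_nonneg (e (k+1)), norm_nonneg (e (k+1) - e k), mul_nonneg hAe.le (norm_nonneg (e (k+1) - e k))]
  have main : (αA ^ 2 / ‖Ae‖ ^ 2 - 2) * ‖e (k + 1)‖ ^ 2 ≤ 2 * ‖e k‖ ^ 2 := by
    rw [sub_mul, div_mul_eq_mul_div, sub_le_iff_le_add, div_le_iff₀ hA2]
    nlinarith [key]
  refine ⟨main, fun hgt => ?_⟩
  have hc : (0:ℝ) < αA ^ 2 / ‖Ae‖ ^ 2 - 2 := by
    rw [sub_pos, lt_div_iff₀ hA2]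
    nlinarith
  have hsq : ‖e (k+1)‖ ^ 2 ≤ (2 / (αA ^ 2 / ‖Ae‖ ^ 2 - 2)) * ‖e k‖ ^ 2 := by
    rw [div_mul_eq_mul_div, le_div_iff₀ hc]
    linarith
  calc ‖e (k+1)‖ = Real.sqrt (‖e (k+1)‖ ^ 2) := (Real.sqrt_sq (norm_nonneg _)).symm
    _ ≤ Real.sqrt ((2 / (αA ^ 2 / ‖Ae‖ ^ 2 - 2)) * ‖e k‖ ^ 2) := Real.sqrt_le_sqrt hsq
    _ = Real.sqrt (2 / (αA ^ 2 / ‖Ae‖ ^ 2 - 2)) * ‖e k‖ := by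
        rw [Real.sqrt_mul (by positivity), Real.sqrt_sq (norm_nonneg _)]
end

section
/- Let A, B, D, L be bounded linear operators on Hilbert spaces with C = B, A + B and D + B coercive (constants α_{A+B}, α_{D+B} > 0), −B coercive (constant α_B > 0) and B bounded, A coercive (constant α_A > 0), and L self-adjoint and coercive with α_L ≥ ‖B‖⁴/(α_{D+B} α_A²). Then the iteration A u^{k+1} + B v^{k+1} = f₁, B u^k + D v^{k+1} + L(v^{k+1} − v^k) = f₂ converges to the solution of A u + B v = f₁, B u + D v = f₂. -/
open scoped RealInnerProductSpace

set_option maxHeartbeats 1600000 in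
/-- Convergence of the stabilized Gauss–Seidel iteration in the case `C = B` (all
operators acting on the same space `V`): if `A + B` and `D + B` are coercive, `−B` is
coercive and `B` bounded, `A` is coercive, and `L` is self-adjoint and coercive with
`αL ≥ ‖B‖⁴/(α_{D+B} αA²)`, then the iteration `Au^{k+1} + Bv^{k+1} = f₁`,
`Bu^k + Dv^{k+1} + L(v^{k+1} − v^k) = f₂` converges to the exact solution. -/
theorem caseCeqB_gaussSeidel_converges
    {V : Type*} [NormedAddCommGroup V] [InnerProductSpace ℝ V] [CompleteSpace V]
    (A B D L : V →L[ℝ] V)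
    (αAB αDB αB αA αL : ℝ)
    (hαAB : 0 < αAB) (hαDB : 0 < αDB) (hαB : 0 < αB) (hαA : 0 < αA) (hαL : 0 < αL)
    (hAB : ∀ x : V, ⟪(A + B) x, x⟫ ≥ αAB * ‖x‖ ^ 2)
    (hDB : ∀ x : V, ⟪(D + B) x, x⟫ ≥ αDB * ‖x‖ ^ 2)
    (hB : ∀ x : V, ⟪(-B) x, x⟫ ≥ αB * ‖x‖ ^ 2)
    (hA : ∀ x : V, ⟪A x, x⟫ ≥ αA * ‖x‖ ^ 2)
    (hLsa : ∀ x y : V, ⟪L x, y⟫ = ⟪x, L y⟫)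
    (hL : ∀ x : V, ⟪L x, x⟫ ≥ αL * ‖x‖ ^ 2)
    (hcond : αL ≥ ‖B‖ ^ 4 / (αDB * αA ^ 2))
    (f₁ f₂ uex vex : V)
    (hex1 : A uex + B vex = f₁)
    (hex2 : B uex + D vex = f₂)
    (u v : ℕ → V)
    (hit1 : ∀ k : ℕ, A (u (k + 1)) + B (v (k + 1)) = f₁)
    (hit2 : ∀ k : ℕ, B (u k) + D (v (k + 1)) + L (v (k + 1) - v k) = f₂) :
    Filter.Tendsto u Filter.atTop (nhds uex) ∧
    Filter.Tendsto v Filter.atTop (nhds vex) := by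
  set x : ℕ → V := fun k => v k - vex with hxdef
  set y : ℕ → V := fun k => u k - uex with hydef
  -- error equations
  have h1 : ∀ k : ℕ, A (y (k + 1)) + B (x (k + 1)) = 0 := by
    intro k
    have e : A (u (k + 1)) + B (v (k + 1)) = A uex + B vex := by rw [hit1 k, hex1]
    simp only [hxdef, hydef, map_sub]
    rw [sub_add_sub_comm, sub_eq_zero]
    exact e
  have h2 : ∀ k : ℕ, B (y k) + D (x (k + 1)) + L (x (k + 1) - x k) = 0 := by
    intro k
    have e : B (u k) + D (v (k + 1)) + L (v (k + 1) - v k) = B uex + D vex := by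
      rw [hit2 k, hex2]
    have hx : x (k + 1) - x k = v (k + 1) - v k := by simp only [hxdef]; abel
    have expand : B (y k) + D (x (k + 1)) + L (x (k + 1) - x k)
        = (B (u k) + D (v (k + 1)) + L (v (k + 1) - v k)) - (B uex + D vex) := by
      simp only [hxdef, hydef, hx, map_sub]; abel
    rw [expand, e, sub_self]
  -- norm of B
  set nB : ℝ := ‖B‖ with hnB
  have hnB0 : 0 ≤ nB := norm_nonneg _
  set c : ℝ := nB ^ 2 / αA with hc
  have hc0 : 0 ≤ c := by positivity
  have hcc : c ^ 2 ≤ αDB * αL := by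
    have h1 : nB ^ 4 ≤ αL * (αDB * αA ^ 2) := by
      rw [ge_iff_le, div_le_iff₀ (by positivity)] at hcond
      exact hcond
    rw [hc, div_pow, div_le_iff₀ (by positivity)]
    calc (nB ^ 2) ^ 2 = nB ^ 4 := by ring
    _ ≤ αL * (αDB * αA ^ 2) := h1
    _ = αDB * αL * αA ^ 2 := by ring
  -- key energy decay
  set E : ℕ → ℝ := fun n => ⟪L (x n), x n⟫ with hE
  have key : ∀ k : ℕ, E (k + 2) + αDB * ‖x (k + 2)‖ ^ 2 + 2 * αAB * ‖y (k + 2)‖ ^ 2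
      ≤ E (k + 1) := by
    intro k
    set a : V := x (k + 2) with ha
    set b : V := x (k + 1) with hb
    set δ : V := a - b with hδ
    set yn : V := y (k + 2) with hyn
    set ym : V := y (k + 1) with hym
    set dy : V := yn - ym with hdy
    have i1 : A yn + B a = 0 := h1 (k + 1)
    have i0 : A ym + B b = 0 := h1 k
    have i2 : B ym + D a + L δ = 0 := h2 (k + 1)
    -- A dy = - B δ
    have idy : A dy + B δ = 0 := by
      simp only [hdy, hδ, map_sub]
      rw [sub_add_sub_comm, i1, i0, sub_self]
    have idy' : A dy = -B δ := by
      rw [← eq_neg_iff_add_eq_zero] at idy; exact idy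
    -- bound ‖dy‖
    have hdyb : αA * ‖dy‖ ^ 2 ≤ nB * ‖δ‖ * ‖dy‖ := by
      have h1' : αA * ‖dy‖ ^ 2 ≤ ⟪A dy, dy⟫ := hA dy
      have h2' : ⟪A dy, dy⟫ ≤ ‖B δ‖ * ‖dy‖ := by
        rw [idy']
        calc ⟪-B δ, dy⟫ ≤ ‖-B δ‖ * ‖dy‖ := real_inner_le_norm _ _
        _ = ‖B δ‖ * ‖dy‖ := by rw [norm_neg]
      have h3' : ‖B δ‖ * ‖dy‖ ≤ nB * ‖δ‖ * ‖dy‖ := by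
        gcongr
        exact B.le_opNorm δ
      linarith
    have hdyn : ‖dy‖ ≤ nB / αA * ‖δ‖ := by
      rcases eq_or_lt_of_le (norm_nonneg dy) with h0 | h0
      · rw [← h0]; positivity
      · have : αA * ‖dy‖ ≤ nB * ‖δ‖ := by
          have := hdyb
          nlinarith
        rw [div_mul_eq_mul_div, le_div_iff₀ hαA]
        linarith
    -- cross term bound
    have hcross : ⟪B dy, a⟫ ≤ c * ‖δ‖ * ‖a‖ := by
      calc ⟪B dy, a⟫ ≤ ‖B dy‖ * ‖a‖ := real_inner_le_norm _ _
      _ ≤ (nB * ‖dy‖) * ‖a‖ := by gcongr; exact B.le_opNorm dy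
      _ ≤ (nB * (nB / αA * ‖δ‖)) * ‖a‖ := by gcongr
      _ = c * ‖δ‖ * ‖a‖ := by rw [hc]; ring
    -- Young
    have hyoung : c * ‖δ‖ * ‖a‖ ≤ αL / 2 * ‖δ‖ ^ 2 + αDB / 2 * ‖a‖ ^ 2 := by
      have h1 : 0 ≤ (αL * ‖δ‖ - c * ‖a‖) ^ 2 := sq_nonneg _
      have h2 : c ^ 2 * ‖a‖ ^ 2 ≤ αDB * αL * ‖a‖ ^ 2 :=
        mul_le_mul_of_nonneg_right hcc (sq_nonneg _)
      have h3 : αL * (2 * (c * ‖δ‖ * ‖a‖)) ≤ αL * (αL * ‖δ‖ ^ 2 + αDB * ‖a‖ ^ 2) := by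
        nlinarith [h1, h2]
      have h4 : 2 * (c * ‖δ‖ * ‖a‖) ≤ αL * ‖δ‖ ^ 2 + αDB * ‖a‖ ^ 2 :=
        le_of_mul_le_mul_left h3 hαL
      linarith
    -- inner product identities
    have e2 : ⟪B ym, a⟫ + ⟪D a, a⟫ + ⟪L δ, a⟫ = 0 := by
      have h : ⟪B ym + D a + L δ, a⟫ = (0:ℝ) := by rw [i2, inner_zero_left]
      simpa [inner_add_left] using h
    have e1 : ⟪A yn, yn⟫ + ⟪B a, yn⟫ = 0 := by
      have h : ⟪A yn + B a, yn⟫ = (0:ℝ) := by rw [i1, inner_zero_left]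
      simpa [inner_add_left] using h
    have hsplit : ⟪B ym, a⟫ = ⟪B yn, a⟫ - ⟪B dy, a⟫ := by
      simp only [hdy, map_sub, inner_sub_left]; ring
    have hr : ⟪L a, b⟫ = ⟪L b, a⟫ := by
      rw [hLsa a b]; exact real_inner_comm _ _
    have hLid : ⟪L δ, a⟫ = (⟪L a, a⟫ + ⟪L δ, δ⟫ - ⟪L b, b⟫) / 2 := by
      simp only [hδ, map_sub, inner_sub_left, inner_sub_right]
      linarith
    have hQ : ⟪A yn, yn⟫ + ⟪B a, yn⟫ + ⟪B yn, a⟫ + ⟪D a, a⟫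
        = ⟪(A + B) yn, yn⟫ + ⟪(D + B) a, a⟫ - ⟪B (yn - a), yn - a⟫ := by
      simp only [ContinuousLinearMap.add_apply, inner_add_left, map_sub,
        inner_sub_left, inner_sub_right]
      ring
    have hQab : ⟪(A + B) yn, yn⟫ ≥ αAB * ‖yn‖ ^ 2 := hAB yn
    have hQdb : ⟪(D + B) a, a⟫ ≥ αDB * ‖a‖ ^ 2 := hDB a
    have hQb : -⟪B (yn - a), yn - a⟫ ≥ 0 := by
      have := hB (yn - a)
      simp only [ContinuousLinearMap.neg_apply, inner_neg_left] at this
      nlinarith [sq_nonneg ‖yn - a‖]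
    have hLd : ⟪L δ, δ⟫ ≥ αL * ‖δ‖ ^ 2 := hL δ
    have hEa : E (k + 2) = ⟪L a, a⟫ := rfl
    have hEb : E (k + 1) = ⟪L b, b⟫ := rfl
    rw [hEa, hEb]
    linarith [hcross, hyoung]
  -- the shifted energy sequence
  set S : ℕ → ℝ := fun k => E (k + 1) with hS
  have hSsucc : ∀ k : ℕ, S (k + 1) ≤ S k := by
    intro k
    have := key k
    have hx2 : 0 ≤ αDB * ‖x (k + 2)‖ ^ 2 := by positivity
    have hy2 : 0 ≤ 2 * αAB * ‖y (k + 2)‖ ^ 2 := by positivity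
    simp only [hS]
    linarith
  have hanti : Antitone S := antitone_nat_of_succ_le hSsucc
  have hS0 : ∀ k : ℕ, 0 ≤ S k := by
    intro k
    have := hL (x (k + 1))
    have : αL * ‖x (k + 1)‖ ^ 2 ≤ E (k + 1) := this
    have h0 : 0 ≤ αL * ‖x (k + 1)‖ ^ 2 := by positivity
    simp only [hS]
    linarith
  have hbdd : BddBelow (Set.range S) := ⟨0, by rintro _ ⟨k, rfl⟩; exact hS0 k⟩
  have hconv : Filter.Tendsto S Filter.atTop (nhds (⨅ i, S i)) :=
    tendsto_atTop_ciInf hanti hbdd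
  have hconv1 : Filter.Tendsto (fun k => S (k + 1)) Filter.atTop (nhds (⨅ i, S i)) :=
    (Filter.tendsto_add_atTop_iff_nat 1).mpr hconv
  have hdiff : Filter.Tendsto (fun k => S k - S (k + 1)) Filter.atTop (nhds 0) := by
    have := hconv.sub hconv1
    simpa using this
  -- squeeze for x
  have hxsq : Filter.Tendsto (fun k => ‖x (k + 2)‖ ^ 2) Filter.atTop (nhds 0) := by
    have hub : ∀ k : ℕ, ‖x (k + 2)‖ ^ 2 ≤ (S k - S (k + 1)) / αDB := by
      intro k
      have := key k
      have hy2 : 0 ≤ 2 * αAB * ‖y (k + 2)‖ ^ 2 := by positivity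
      rw [le_div_iff₀ hαDB]
      simp only [hS]
      linarith
    have hupper : Filter.Tendsto (fun k => (S k - S (k + 1)) / αDB) Filter.atTop (nhds 0) := by
      have := hdiff.div_const αDB
      simpa using this
    exact tendsto_of_tendsto_of_tendsto_of_le_of_le tendsto_const_nhds hupper
      (fun k => by positivity) hub
  have hysq : Filter.Tendsto (fun k => ‖y (k + 2)‖ ^ 2) Filter.atTop (nhds 0) := by
    have hub : ∀ k : ℕ, ‖y (k + 2)‖ ^ 2 ≤ (S k - S (k + 1)) / (2 * αAB) := by
      intro k
      have := key k
      have hx2 : 0 ≤ αDB * ‖x (k + 2)‖ ^ 2 := by positivity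
      rw [le_div_iff₀ (by positivity)]
      simp only [hS]
      linarith
    have hupper : Filter.Tendsto (fun k => (S k - S (k + 1)) / (2 * αAB)) Filter.atTop (nhds 0) := by
      have := hdiff.div_const (2 * αAB)
      simpa using this
    exact tendsto_of_tendsto_of_tendsto_of_le_of_le tendsto_const_nhds hupper
      (fun k => by positivity) hub
  -- from squared norms to norms
  have sqrt0 : Filter.Tendsto Real.sqrt (nhds 0) (nhds 0) := by
    have := Real.continuous_sqrt.tendsto 0
    simpa using this
  have hxn : Filter.Tendsto (fun k => ‖x (k + 2)‖) Filter.atTop (nhds 0) :=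
    Filter.Tendsto.congr (fun k => Real.sqrt_sq (norm_nonneg _)) (sqrt0.comp hxsq)
  have hyn : Filter.Tendsto (fun k => ‖y (k + 2)‖) Filter.atTop (nhds 0) :=
    Filter.Tendsto.congr (fun k => Real.sqrt_sq (norm_nonneg _)) (sqrt0.comp hysq)
  have hx0 : Filter.Tendsto x Filter.atTop (nhds 0) := by
    refine (Filter.tendsto_add_atTop_iff_nat 2).mp ?_
    exact tendsto_zero_iff_norm_tendsto_zero.mpr hxn
  have hy0 : Filter.Tendsto y Filter.atTop (nhds 0) := by
    refine (Filter.tendsto_add_atTop_iff_nat 2).mp ?_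
    exact tendsto_zero_iff_norm_tendsto_zero.mpr hyn
  constructor
  · have : Filter.Tendsto (fun k => y k + uex) Filter.atTop (nhds (0 + uex)) :=
      hy0.add_const uex
    simpa [hydef] using this
  · have : Filter.Tendsto (fun k => x k + vex) Filter.atTop (nhds (0 + vex)) :=
      hx0.add_const vex
    simpa [hxdef] using this
end
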